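/- Let G be drawn from the stochastic block model 𝔾(n, a_n/n, b_n/n) and let ℓ = ℓ_n be a sequence with ℓ_n · log(max(2 d_n, 2)) = o(log n), where d_n = (a_n+b_n)/2. Then P[G is ℓ-tangle-free] ≥ 1 − n^{−1+o(1)}; that is, for every δ > 0 there is N such that for all n ≥ N, the probability that G contains an ℓ_n-tangle as a subgraph is at most n^{−1+δ}. -/

import Mathlib

open Filter Finset
open scoped Classical

noncomputable section

/-! ### The sample space of the stochastic block model -/

/-- Potential-edge index: ordered pairs `(u,v)` of vertices with `u < v`. -/
def EdgeIdx (n : ℕ) : Type := {p : Fin n × Fin n // p.1 < p.2}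

instance (n : ℕ) : Fintype (EdgeIdx n) := by unfold EdgeIdx; infer_instance
instance (n : ℕ) : DecidableEq (EdgeIdx n) := by unfold EdgeIdx; infer_instance

/-- A graph on vertex set `Fin n`, given by the indicator of each potential edge. -/
def SGraph (n : ℕ) : Type := EdgeIdx n → Bool

instance (n : ℕ) : Fintype (SGraph n) := by unfold SGraph; infer_instance
instance (n : ℕ) : DecidableEq (SGraph n) := by unfold SGraph; infer_instance

/-- Adjacency in a graph. -/
def adj {n : ℕ} (G : SGraph n) (u v : Fin n) : Bool :=
  if h : u < v then G ⟨(u, v), h⟩ else if h' : v < u then G ⟨(v, u), h'⟩ else false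

/-- The ±1 value of a Boolean label. -/
def sgn (b : Bool) : ℝ := if b then 1 else -1

/-- Sample space of the block model: a labelling together with a graph. -/
def SampleSpace (n : ℕ) : Type := (Fin n → Bool) × SGraph n

instance (n : ℕ) : Fintype (SampleSpace n) := by unfold SampleSpace; infer_instance

/-- The probability mass of an outcome `ω` under the stochastic block model
`𝔾(n, a/n, b/n)`: labels are uniform, and conditionally on the labels each
potential edge appears independently with probability `a/n` (equal labels)
or `b/n` (unequal labels). -/
def bmass (a b : ℝ) (n : ℕ) (ω : SampleSpace n) : ℝ :=
  (1 / 2) ^ n *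
    ∏ e : EdgeIdx n,
      (if ω.2 e then (if ω.1 e.1.1 = ω.1 e.1.2 then a / n else b / n)
       else 1 - (if ω.1 e.1.1 = ω.1 e.1.2 then a / n else b / n))

/-- Probability of an event under the block model. -/
def bPr (a b : ℝ) (n : ℕ) (A : Set (SampleSpace n)) : ℝ :=
  ∑ ω : SampleSpace n, if ω ∈ A then bmass a b n ω else 0

/-- Conditional expectation of `f` given the event `A`, under the block model. -/
def bCondE (a b : ℝ) (n : ℕ) (f : SampleSpace n → ℝ) (A : Set (SampleSpace n)) : ℝ :=
  (∑ ω : SampleSpace n, if ω ∈ A then bmass a b n ω * f ω else 0) / bPr a b n A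

/-- Conditional probability of `B` given `A`, under the block model. -/
def bCondPr (a b : ℝ) (n : ℕ) (B A : Set (SampleSpace n)) : ℝ :=
  bPr a b n (B ∩ A) / bPr a b n A

/-- The event that the labelling agrees with `τ` on the set `U`. -/
def labelEvent {n : ℕ} (U : Finset (Fin n)) (τ : Fin n → Bool) : Set (SampleSpace n) :=
  {ω | ∀ x ∈ U, ω.1 x = τ x}

/-- Mass of a graph under the block model conditioned on the full labelling `τ`. -/
def cmass {n : ℕ} (a b : ℝ) (τ : Fin n → Bool) (G : SGraph n) : ℝ :=
  ∏ e : EdgeIdx n,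
    (if G e then (if τ e.1.1 = τ e.1.2 then a / n else b / n)
     else 1 - (if τ e.1.1 = τ e.1.2 then a / n else b / n))

/-- Expectation over the graph in the block model conditioned on the labelling `τ`. -/
def cE {n : ℕ} (a b : ℝ) (τ : Fin n → Bool) (f : SGraph n → ℝ) : ℝ :=
  ∑ G : SGraph n, cmass a b τ G * f G

/-- Mass of a graph with independent edges, where the pair `{x,y}` is an edge with
probability `(d + τ_x τ_y s)/n`. -/
def lmass {n : ℕ} (s d : ℝ) (τ : Fin n → Bool) (G : SGraph n) : ℝ :=
  ∏ e : EdgeIdx n,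
    (if G e then (d + sgn (τ e.1.1) * sgn (τ e.1.2) * s) / n
     else 1 - (d + sgn (τ e.1.1) * sgn (τ e.1.2) * s) / n)

/-- Expectation for the random graph with edge probabilities `(d + τ_x τ_y s)/n`. -/
def lE {n : ℕ} (s d : ℝ) (τ : Fin n → Bool) (f : SGraph n → ℝ) : ℝ :=
  ∑ G : SGraph n, lmass s d τ G * f G

/-! ### Paths -/

/-- The `i`-th vertex of a path encoded as `γ : Fin (k+1) → β` (index clamped to `k`). -/
def pget {β : Type*} {k : ℕ} (γ : Fin (k + 1) → β) (i : ℕ) : β :=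
  γ ⟨min i k, by omega⟩

/-- A path of length `k`: consecutive vertices are distinct. -/
def IsPath {n : ℕ} (k : ℕ) (γ : Fin (k + 1) → Fin n) : Prop :=
  ∀ i < k, pget γ i ≠ pget γ (i + 1)

/-- A non-backtracking path of length `k`. -/
def IsNB {n : ℕ} (k : ℕ) (γ : Fin (k + 1) → Fin n) : Prop :=
  IsPath k γ ∧ ∀ i, i + 2 ≤ k → pget γ i ≠ pget γ (i + 2)

/-- A self-avoiding path of length `k`: all vertices distinct. -/
def IsSAW {n : ℕ} (k : ℕ) (γ : Fin (k + 1) → Fin n) : Prop :=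
  IsPath k γ ∧ ∀ i ≤ k, ∀ j ≤ k, pget γ i = pget γ j → i = j

/-- The edge weight `W_e = 1_{e ∈ E(G)} - d/n`. -/
def W {n : ℕ} (d : ℝ) (G : SGraph n) (u v : Fin n) : ℝ :=
  (if adj G u v then 1 else 0) - d / n

/-- The weight `X_γ = ∏ W_{{γ(i-1), γ(i)}}` of a path `γ` of length `k`. -/
def Xweight {n : ℕ} (d : ℝ) (G : SGraph n) (k : ℕ) (γ : Fin (k + 1) → Fin n) : ℝ :=
  ∏ i ∈ Finset.range k, W d G (pget γ i) (pget γ (i + 1))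

/-- `Y_{u,v}`: the total weight of self-avoiding paths of length `k` from `u` to `v`. -/
def Ysaw {n : ℕ} (d : ℝ) (G : SGraph n) (k : ℕ) (u v : Fin n) : ℝ :=
  ∑ γ : Fin (k + 1) → Fin n,
    if IsSAW k γ ∧ pget γ 0 = u ∧ pget γ k = v then Xweight d G k γ else 0

/-- `N^{(k)}_{u,v}`: the total weight of non-backtracking paths of length `k` from `u` to `v`. -/
def Nnb {n : ℕ} (d : ℝ) (G : SGraph n) (k : ℕ) (u v : Fin n) : ℝ :=
  ∑ γ : Fin (k + 1) → Fin n,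
    if IsNB k γ ∧ pget γ 0 = u ∧ pget γ k = v then Xweight d G k γ else 0

/-! ### New, old, returning edges -/

/-- Edge `i` of `γ` (from `γ i` to `γ (i+1)`) is *new* if its head has not been
visited before. -/
def isNewEdge {n k : ℕ} (γ : Fin (k + 1) → Fin n) (i : ℕ) : Prop :=
  ∀ j ≤ i, pget γ j ≠ pget γ (i + 1)

/-- Edge `i` of `γ` is *old* if it coincides (as an unordered pair) with an earlier edge. -/
def isOldEdge {n k : ℕ} (γ : Fin (k + 1) → Fin n) (i : ℕ) : Prop :=
  ∃ j < i, s(pget γ j, pget γ (j + 1)) = s(pget γ i, pget γ (i + 1))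

/-- The number of new edges of a path. -/
def kNew {n k : ℕ} (γ : Fin (k + 1) → Fin n) : ℕ :=
  ((Finset.range k).filter fun i => isNewEdge γ i).card

/-- The number of returning edges of a path (neither new nor old). -/
def kRet {n k : ℕ} (γ : Fin (k + 1) → Fin n) : ℕ :=
  ((Finset.range k).filter fun i => ¬ isNewEdge γ i ∧ ¬ isOldEdge γ i).card

/-- Edge `i` of `γ₂` is *new with respect to `γ₁`* if its head is not a vertex of `γ₁`. -/
def isNewWrt {n k : ℕ} (γ₁ γ₂ : Fin (k + 1) → Fin n) (i : ℕ) : Prop :=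
  ∀ j ≤ k, pget γ₁ j ≠ pget γ₂ (i + 1)

/-- Edge `i` of `γ₂` is *old with respect to `γ₁`* if it appears (as an unordered
pair) among the edges of `γ₁`. -/
def isOldWrt {n k : ℕ} (γ₁ γ₂ : Fin (k + 1) → Fin n) (i : ℕ) : Prop :=
  ∃ j < k, s(pget γ₁ j, pget γ₁ (j + 1)) = s(pget γ₂ i, pget γ₂ (i + 1))

/-- The number of edges of `γ₂` that are new with respect to `γ₁`. -/
def kNewWrt {n k : ℕ} (γ₁ γ₂ : Fin (k + 1) → Fin n) : ℕ :=
  ((Finset.range k).filter fun i => isNewWrt γ₁ γ₂ i).card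

/-- The number of edges of `γ₂` that are returning with respect to `γ₁`. -/
def kRetWrt {n k : ℕ} (γ₁ γ₂ : Fin (k + 1) → Fin n) : ℕ :=
  ((Finset.range k).filter fun i => ¬ isNewWrt γ₁ γ₂ i ∧ ¬ isOldWrt γ₁ γ₂ i).card

/-! ### Multigraphs, tangles -/

/-- The support simple graph of a multigraph given by multiplicities `m`. -/
def msupp {n : ℕ} (m : Sym2 (Fin n) → ℕ) : SimpleGraph (Fin n) where
  Adj x y := x ≠ y ∧ 0 < m s(x, y)
  symm := by
    constructor
    intro x y h
    exact ⟨h.1.symm, by rw [Sym2.eq_swap]; exact h.2⟩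
  loopless := by constructor; intro x h; exact h.1 rfl

/-- The ball of radius `ℓ` around `v` in the multigraph `m`. -/
def mball {n : ℕ} (m : Sym2 (Fin n) → ℕ) (ℓ : ℕ) (v : Fin n) : Set (Fin n) :=
  {u | ∃ p : (msupp m).Walk v u, p.length ≤ ℓ}

/-- The number of edges (with multiplicity) of the multigraph `m` with both
endpoints in `S`. -/
def edgeCountIn {n : ℕ} (m : Sym2 (Fin n) → ℕ) (S : Set (Fin n)) : ℕ :=
  ∑ e : Sym2 (Fin n), if ¬ e.IsDiag ∧ ∀ x ∈ e, x ∈ S then m e else 0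

/-- A multigraph is `ℓ`-tangle-free if every neighbourhood of radius `ℓ` contains at
most one cycle, i.e. the number of edges (with multiplicity) inside every radius-`ℓ`
ball is at most the number of its vertices. -/
def MTangleFree {n : ℕ} (ℓ : ℕ) (m : Sym2 (Fin n) → ℕ) : Prop :=
  ∀ v : Fin n, edgeCountIn m (mball m ℓ v) ≤ (mball m ℓ v).ncard

/-- The multiplicity with which the path `γ` traverses each unordered edge. -/
def pmul {n k : ℕ} (γ : Fin (k + 1) → Fin n) : Sym2 (Fin n) → ℕ := fun e =>
  ((Finset.range k).filter fun i => e = s(pget γ i, pget γ (i + 1))).card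

/-- The number `t(γ)` of `ℓ`-tangles of a path `γ`: the minimal number of edges
(counted with multiplicity) whose deletion from the multigraph of `γ` leaves an
`ℓ`-tangle-free multigraph. -/
def tTangles {n k : ℕ} (ℓ : ℕ) (γ : Fin (k + 1) → Fin n) : ℕ :=
  sInf {t | ∃ c : Sym2 (Fin n) → ℕ, (∀ e, c e ≤ pmul γ e) ∧
      (∑ e : Sym2 (Fin n), c e) = t ∧ MTangleFree ℓ (fun e => pmul γ e - c e)}

/-- The multiplicity function (0/1) of the edges of a graph `G : SGraph n`. -/
def gmult {n : ℕ} (G : SGraph n) : Sym2 (Fin n) → ℕ := fun e =>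
  if ∃ x y : Fin n, adj G x y = true ∧ e = s(x, y) then 1 else 0

/-! ### SAW decompositions -/

/-- The set of (unordered) edges of a path. -/
def pathEdges {n k : ℕ} (γ : Fin (k + 1) → Fin n) : Set (Sym2 (Fin n)) :=
  {e | ∃ i < k, e = s(pget γ i, pget γ (i + 1))}

/-- The degree of a vertex in the graph `(V(γ), E(γ))` of a path. -/
def pathDeg {n k : ℕ} (γ : Fin (k + 1) → Fin n) (w : Fin n) : ℕ :=
  Set.ncard {x : Fin n | s(w, x) ∈ pathEdges γ}

/-- `γ` backtracks at `w`. -/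
def backtrackAt {n k : ℕ} (γ : Fin (k + 1) → Fin n) (w : Fin n) : Prop :=
  ∃ i, 0 < i ∧ i < k ∧ pget γ (i - 1) = pget γ (i + 1) ∧ pget γ i = w

/-- The number of backtracks of `γ`. -/
def numBacktracks {n k : ℕ} (γ : Fin (k + 1) → Fin n) : ℕ :=
  ((Finset.range k).filter fun i => 0 < i ∧ pget γ (i - 1) = pget γ (i + 1)).card

/-- The endpoint set `V_end` of the canonical SAW-decomposition: vertices of degree
at least 3, the two endpoints of `γ`, and the backtrack points of `γ`. -/
def VEnd {n k : ℕ} (γ : Fin (k + 1) → Fin n) : Set (Fin n) :=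
  {w | 3 ≤ pathDeg γ w} ∪ {pget γ 0, pget γ k} ∪ {w | backtrackAt γ w}

/-- The edges of the segment of `γ` between positions `j` and `j'`. -/
def segEdges {n k : ℕ} (γ : Fin (k + 1) → Fin n) (j j' : ℕ) : Set (Sym2 (Fin n)) :=
  {e | ∃ i, j ≤ i ∧ i < j' ∧ e = s(pget γ i, pget γ (i + 1))}

/-- `(j, j')` are two consecutive visit times of `γ` to the set `VE`. -/
def IsSegPair {n k : ℕ} (γ : Fin (k + 1) → Fin n) (VE : Set (Fin n)) (j j' : ℕ) : Prop :=
  j < j' ∧ j' ≤ k ∧ pget γ j ∈ VE ∧ pget γ j' ∈ VE ∧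
    ∀ i, j < i → i < j' → pget γ i ∉ VE

/-- The number of distinct segments in the SAW-decomposition of `γ` with endpoint
set `VE` (segments identified by their edge sets). -/
def numSegs {n k : ℕ} (γ : Fin (k + 1) → Fin n) (VE : Set (Fin n)) : ℕ :=
  Set.ncard {E : Set (Sym2 (Fin n)) | ∃ j j', IsSegPair γ VE j j' ∧ E = segEdges γ j j'}

/-- The edge set `E(Z^short(γ))` of the segments of the canonical SAW-decomposition
of `γ` of length at most `4ℓ`. -/
def EZshort {n k : ℕ} (ℓ : ℕ) (γ : Fin (k + 1) → Fin n) : Set (Sym2 (Fin n)) :=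
  {e | ∃ j j', IsSegPair γ (VEnd γ) j j' ∧ j' - j ≤ 4 * ℓ ∧ e ∈ segEdges γ j j'}

/-- The family `𝓕(γ)` of sets of short-segment edges. -/
def FFam {n k : ℕ} (ℓ : ℕ) (γ : Fin (k + 1) → Fin n) : Set (Finset (Sym2 (Fin n))) :=
  {F | ↑F ⊆ EZshort ℓ γ ∧ tTangles ℓ γ ≤ ∑ e ∈ F, pmul γ e ∧ F.card ≤ kRet γ - 1}

end
section Helpers
open Finset
variable {n : ℕ}

lemma adj_symm (G : SGraph n) (u v : Fin n) : adj G u v = adj G v u := by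
  unfold adj
  rcases lt_trichotomy u v with h | h | h
  · rw [dif_pos h, dif_neg (not_lt.2 h.le), dif_pos h]
  · subst h; rfl
  · rw [dif_neg (not_lt.2 h.le), dif_pos h, dif_pos h]

/-- The edge `e` is present in `G`. -/
def present (G : SGraph n) (e : Sym2 (Fin n)) : Prop :=
  ∃ x y : Fin n, adj G x y = true ∧ e = s(x, y)

/-- The event that all edges of `F` are present. -/
def EvF (F : Finset (Sym2 (Fin n))) : Set (SampleSpace n) :=
  {ω | ∀ e ∈ F, present ω.2 e}

lemma present_iff (G : SGraph n) {x y : Fin n} (h : x < y) :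
    present G s(x, y) ↔ G ⟨(x, y), h⟩ = true := by
  constructor
  · rintro ⟨x', y', hadj, heq⟩
    have hxy : adj G x y = true := by
      rcases Sym2.eq_iff.1 heq with ⟨rfl, rfl⟩ | ⟨rfl, rfl⟩
      · exact hadj
      · rw [adj_symm]; exact hadj
    rwa [adj, dif_pos h] at hxy
  · intro hG
    refine ⟨x, y, ?_, rfl⟩
    rw [adj, dif_pos h]; exact hG

/-- Translation of a set of (nondiagonal) unordered edges into edge indices. -/
def Jof (F : Finset (Sym2 (Fin n))) : Finset (EdgeIdx n) :=
  univ.filter fun i : EdgeIdx n => s(i.1.1, i.1.2) ∈ F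

lemma card_Jof (F : Finset (Sym2 (Fin n))) (hF : ∀ e ∈ F, ¬ e.IsDiag) :
    (Jof F).card = F.card := by
  apply Finset.card_bij (fun i _ => s(i.1.1, i.1.2))
  · intro i hi; exact (Finset.mem_filter.1 hi).2
  · intro i hi j hj hij
    rcases Sym2.eq_iff.1 hij with ⟨h1, h2⟩ | ⟨h1, h2⟩
    · exact Subtype.ext (Prod.ext h1 h2)
    · exfalso
      have hi2 : (i.1).1 < (i.1).2 := i.2
      have hj2 : (j.1).1 < (j.1).2 := j.2
      rw [h1, h2] at hi2
      exact lt_asymm hi2 hj2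
  · intro e he
    induction e using Sym2.inductionOn with
    | hf x y =>
      have hxy : x ≠ y := by
        intro hxy; exact hF _ he (by rw [hxy]; exact Sym2.mk_isDiag_iff.2 rfl)
      rcases lt_or_gt_of_ne hxy with h | h
      · exact ⟨⟨(x, y), h⟩, Finset.mem_filter.2 ⟨Finset.mem_univ _, he⟩, rfl⟩
      · refine ⟨⟨(y, x), h⟩, Finset.mem_filter.2 ⟨Finset.mem_univ _, ?_⟩, ?_⟩
        · rwa [Sym2.eq_swap]
        · rw [Sym2.eq_swap]

lemma EvF_eq (F : Finset (Sym2 (Fin n))) (hF : ∀ e ∈ F, ¬ e.IsDiag) :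
    EvF F = {ω : SampleSpace n | ∀ i ∈ Jof F, ω.2 i = true} := by
  ext ω
  constructor
  · intro hω i hi
    have hmem : s(i.1.1, i.1.2) ∈ F := (Finset.mem_filter.1 hi).2
    have := (present_iff ω.2 i.2).1 (hω _ hmem)
    exact this
  · intro hω e he
    induction e using Sym2.inductionOn with
    | hf x y =>
      have hxy : x ≠ y := by
        intro hxy; exact hF _ he (by rw [hxy]; exact Sym2.mk_isDiag_iff.2 rfl)
      rcases lt_or_gt_of_ne hxy with h | h
      · exact (present_iff ω.2 h).2 (hω ⟨(x, y), h⟩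
          (Finset.mem_filter.2 ⟨Finset.mem_univ _, he⟩))
      · have : present ω.2 s(y, x) := (present_iff ω.2 h).2 (hω ⟨(y, x), h⟩
          (Finset.mem_filter.2 ⟨Finset.mem_univ _, by rwa [Sym2.eq_swap]⟩))
        rwa [Sym2.eq_swap] at this

end Helpers
section Prob
open Finset
variable {n : ℕ}

lemma bmass_nonneg {a b : ℝ} (ha0 : 0 ≤ a / n) (ha1 : a / n ≤ 1)
    (hb0 : 0 ≤ b / n) (hb1 : b / n ≤ 1) (ω : SampleSpace n) :
    0 ≤ bmass a b n ω := by
  refine mul_nonneg (pow_nonneg (by norm_num) _) (Finset.prod_nonneg fun e _ => ?_)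
  by_cases h1 : ω.2 e <;> by_cases h2 : ω.1 e.1.1 = ω.1 e.1.2 <;>
    simp [h1, h2] <;> linarith

lemma sum_sampleSpace (f : SampleSpace n → ℝ) :
    ∑ ω : SampleSpace n, f ω
      = ∑ τ : Fin n → Bool, ∑ g : EdgeIdx n → Bool, f (τ, g) := by
  rw [Fintype.sum_equiv
    (show SampleSpace n ≃ (Fin n → Bool) × (EdgeIdx n → Bool) from Equiv.refl _)
    f (fun p => f (p.1, p.2)) (fun _ => rfl)]
  exact Fintype.sum_prod_type _

lemma bPr_EvF_le (a b q : ℝ) (ha0 : 0 ≤ a / n) (hb0 : 0 ≤ b / n)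
    (haq : a / n ≤ q) (hbq : b / n ≤ q)
    (F : Finset (Sym2 (Fin n))) (hF : ∀ e ∈ F, ¬ e.IsDiag) :
    bPr a b n (EvF F) ≤ q ^ F.card := by
  have hq0 : 0 ≤ q := le_trans ha0 haq
  set J := Jof F with hJ
  obtain ⟨A, hA⟩ : ∃ A : Set (SampleSpace n),
      A = {ω : SampleSpace n | ∀ i ∈ J, ω.2 i = true} := ⟨_, rfl⟩
  rw [EvF_eq F hF, ← hA, ← card_Jof F hF]
  set P : (Fin n → Bool) → EdgeIdx n → ℝ :=
    fun τ i => if τ i.1.1 = τ i.1.2 then a / n else b / n with hPdef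
  have hPle : ∀ τ i, P τ i ≤ q := by
    intro τ i; by_cases h : τ i.1.1 = τ i.1.2 <;> simp [hPdef, h, haq, hbq]
  have hP0 : ∀ τ i, 0 ≤ P τ i := by
    intro τ i; by_cases h : τ i.1.1 = τ i.1.2 <;> simp [hPdef, h, ha0, hb0]
  have h1 : bPr a b n A
      = ∑ τ : Fin n → Bool, ∑ g : EdgeIdx n → Bool,
          (if (τ, g) ∈ A then bmass a b n (τ, g) else 0) :=
    sum_sampleSpace _
  have key : ∀ τ : Fin n → Bool,
      (∑ g : EdgeIdx n → Bool,
        (if (τ, g) ∈ A then bmass a b n (τ, g) else 0))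
      = (1/2 : ℝ) ^ n * ∏ i ∈ J, P τ i := by
    intro τ
    set w : EdgeIdx n → Bool → ℝ := fun e bb =>
      if e ∈ J then (if bb then P τ e else 0)
      else (if bb then P τ e else 1 - P τ e) with hw
    have hmass : ∀ g : EdgeIdx n → Bool,
        (if (τ, g) ∈ A then bmass a b n (τ, g) else 0)
        = (1/2 : ℝ) ^ n * ∏ e : EdgeIdx n, w e (g e) := by
      intro g
      have hmem : (τ, g) ∈ A ↔ ∀ i ∈ J, g i = true := by rw [hA]; exact Iff.rfl
      by_cases hall : ∀ i ∈ J, g i = true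
      · rw [if_pos (hmem.2 hall)]; unfold bmass
        congr 1
        refine Finset.prod_congr rfl fun e _ => ?_
        by_cases he : e ∈ J
        · simp only [hw, hPdef, if_pos he, hall e he, if_true]
        · simp only [hw, hPdef, if_neg he]
      · rw [if_neg (fun h => hall (hmem.1 h))]
        push_neg at hall
        obtain ⟨i, hi, hgi⟩ := hall
        have hgi' : g i = false := by simpa using hgi
        have hzero : w i (g i) = 0 := by simp [hw, if_pos hi, hgi']
        rw [Finset.prod_eq_zero (Finset.mem_univ i) hzero, mul_zero]
    have hfac : ∑ g : EdgeIdx n → Bool, ∏ e : EdgeIdx n, w e (g e)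
        = ∏ e : EdgeIdx n, (w e true + w e false) := by
      have h2 := Finset.prod_univ_sum (fun _ : EdgeIdx n => (univ : Finset Bool)) w
      rw [Fintype.piFinset_univ] at h2
      rw [← h2]
      exact Finset.prod_congr rfl fun e _ => by rw [Fintype.sum_bool]
    have hpm : ∀ e : EdgeIdx n, w e true + w e false = if e ∈ J then P τ e else 1 := by
      intro e; by_cases he : e ∈ J <;> simp [hw, he] <;> ring
    calc ∑ g : EdgeIdx n → Bool, (if (τ, g) ∈ A then bmass a b n (τ, g) else 0)
        = ∑ g : EdgeIdx n → Bool, (1/2 : ℝ) ^ n * ∏ e : EdgeIdx n, w e (g e) :=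
          Finset.sum_congr rfl fun g _ => hmass g
      _ = (1/2 : ℝ) ^ n * ∑ g : EdgeIdx n → Bool, ∏ e : EdgeIdx n, w e (g e) := by
          rw [← Finset.mul_sum]
      _ = (1/2 : ℝ) ^ n * ∏ e : EdgeIdx n, (w e true + w e false) := by rw [hfac]
      _ = (1/2 : ℝ) ^ n * ∏ e : EdgeIdx n, (if e ∈ J then P τ e else 1) := by
          rw [Finset.prod_congr rfl fun e _ => hpm e]
      _ = (1/2 : ℝ) ^ n * ∏ i ∈ J, P τ i := by
          rw [Finset.prod_ite_mem, Finset.univ_inter]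
  rw [h1, Finset.sum_congr rfl fun τ _ => key τ]
  have hbound : ∀ τ : Fin n → Bool,
      (1/2 : ℝ) ^ n * ∏ i ∈ J, P τ i ≤ (1/2 : ℝ) ^ n * q ^ J.card := by
    intro τ
    refine mul_le_mul_of_nonneg_left ?_ (by positivity)
    calc ∏ i ∈ J, P τ i ≤ ∏ i ∈ J, q :=
          Finset.prod_le_prod (fun i _ => hP0 τ i) (fun i _ => hPle τ i)
      _ = q ^ J.card := Finset.prod_const q
  calc ∑ τ : Fin n → Bool, (1/2 : ℝ) ^ n * ∏ i ∈ J, P τ i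
      ≤ ∑ _τ : Fin n → Bool, (1/2 : ℝ) ^ n * q ^ J.card :=
        Finset.sum_le_sum fun τ _ => hbound τ
    _ = (2 : ℝ) ^ n * ((1/2 : ℝ) ^ n * q ^ J.card) := by
        rw [Finset.sum_const, nsmul_eq_mul]
        congr 1
        simp [Fintype.card_fun]
    _ = q ^ J.card := by
        rw [← mul_assoc, ← mul_pow]
        norm_num

lemma bPr_le_sum_cover {a b : ℝ} {ι : Type*} (t : Finset ι)
    (A : Set (SampleSpace n)) (B : ι → Set (SampleSpace n))
    (hm : ∀ ω : SampleSpace n, 0 ≤ bmass a b n ω)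
    (hc : ∀ ω ∈ A, ∃ i ∈ t, ω ∈ B i) :
    bPr a b n A ≤ ∑ i ∈ t, bPr a b n (B i) := by
  have hpt : ∀ ω : SampleSpace n,
      (if ω ∈ A then bmass a b n ω else 0)
      ≤ ∑ i ∈ t, (if ω ∈ B i then bmass a b n ω else 0) := by
    intro ω
    by_cases hAm : ω ∈ A
    · obtain ⟨i, hi, hBi⟩ := hc ω hAm
      rw [if_pos hAm]
      calc bmass a b n ω = (if ω ∈ B i then bmass a b n ω else 0) := (if_pos hBi).symm
        _ ≤ _ := Finset.single_le_sum
            (f := fun i => if ω ∈ B i then bmass a b n ω else 0)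
            (fun j _ => by by_cases h : ω ∈ B j <;> simp [h, hm ω]) hi
    · rw [if_neg hAm]
      exact Finset.sum_nonneg fun j _ => by by_cases h : ω ∈ B j <;> simp [h, hm ω]
  calc bPr a b n A ≤ ∑ ω : SampleSpace n, ∑ i ∈ t,
        (if ω ∈ B i then bmass a b n ω else 0) := Finset.sum_le_sum fun ω _ => hpt ω
    _ = ∑ i ∈ t, ∑ ω : SampleSpace n,
        (if ω ∈ B i then bmass a b n ω else 0) := Finset.sum_comm
    _ = ∑ i ∈ t, bPr a b n (B i) := rfl

end Prob
section Structural
open Finset SimpleGraph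

lemma sym2_exists {α : Type*} (e : Sym2 α) (h : ¬ e.IsDiag) :
    ∃ x y, x ≠ y ∧ e = s(x, y) := by
  induction e using Sym2.inductionOn with
  | hf x y =>
    exact ⟨x, y, fun hxy => h (by rw [hxy]; exact Sym2.mk_isDiag_iff.2 rfl), rfl⟩

/-- The potential (nondiagonal) edges with both endpoints in `S`. -/
def edgesIn {n : ℕ} (S : Finset (Fin n)) : Finset (Sym2 (Fin n)) :=
  Finset.univ.filter fun e => ¬ e.IsDiag ∧ ∀ x ∈ e, x ∈ S

lemma card_edgesIn_le {n : ℕ} (S : Finset (Fin n)) :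
    (edgesIn S).card ≤ S.card ^ 2 := by
  have h : (edgesIn S).card ≤ (S ×ˢ S).card := by
    apply Finset.card_le_card_of_injOn (f := fun e : Sym2 (Fin n) => Quot.out e)
    · intro e he
      obtain ⟨_, hall⟩ := (Finset.mem_filter.1 he).2
      exact Finset.mem_product.2 ⟨hall _ (Sym2.out_fst_mem e), hall _ (Sym2.out_snd_mem e)⟩
    · intro e _ e' _ hee
      have h2 := congrArg (Quot.mk (Sym2.Rel (Fin n))) hee
      rwa [Quot.out_eq, Quot.out_eq] at h2
  simpa [Finset.card_product, sq] using h

lemma mtf_zero {n : ℕ} (m : Sym2 (Fin n) → ℕ) : MTangleFree 0 m := by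
  intro v
  have hball : mball m 0 v = {v} := by
    ext u
    constructor
    · rintro ⟨p, hp⟩
      exact (SimpleGraph.Walk.eq_of_length_eq_zero (Nat.le_zero.1 hp)).symm
    · rintro rfl
      exact ⟨SimpleGraph.Walk.nil, by simp⟩
  rw [hball]
  have hzero : edgeCountIn m {v} = 0 := by
    rw [edgeCountIn]
    apply Finset.sum_eq_zero
    intro e _
    rw [if_neg]
    rintro ⟨hd, hall⟩
    obtain ⟨x, y, hxy, rfl⟩ := sym2_exists e hd
    exact hxy (((hall x (by simp)).trans (hall y (by simp)).symm))
  rw [hzero]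
  simp

lemma gmult_pos_iff {n : ℕ} (G : SGraph n) (e : Sym2 (Fin n)) :
    0 < gmult G e ↔ present G e := by
  rw [gmult]
  by_cases h : ∃ x y : Fin n, adj G x y = true ∧ e = s(x, y) <;> simp [h, present]

lemma tangle_witness {n ℓ : ℕ} (G : SGraph n)
    (h : ¬ MTangleFree ℓ (gmult G)) :
    ∃ S : Finset (Fin n), ∃ F : Finset (Sym2 (Fin n)),
      S.card ≤ 4 * ℓ + 4 ∧ F ∈ Finset.powersetCard (S.card + 1) (edgesIn S) ∧
      ∀ e ∈ F, present G e := by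
  set m := gmult G with hm
  set Γ := msupp m with hΓ
  rw [MTangleFree] at h
  push_neg at h
  obtain ⟨v, hcount⟩ := h
  set B : Set (Fin n) := mball m ℓ v with hB
  -- basic facts about the ball
  have hBmem : ∀ u, u ∈ B ↔ ∃ p : Γ.Walk v u, p.length ≤ ℓ := fun u => Iff.rfl
  have hreach : ∀ u ∈ B, Γ.Reachable v u := fun u hu => ⟨hu.choose⟩
  have hdist : ∀ u ∈ B, Γ.dist v u ≤ ℓ := by
    intro u hu
    obtain ⟨p, hp⟩ := hu
    exact (SimpleGraph.dist_le p).trans hp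
  have hBv : v ∈ B := ⟨SimpleGraph.Walk.nil, by simp⟩
  have hDpos : ∀ u ∈ B, u ≠ v → 0 < Γ.dist v u := by
    intro u hu huv
    rcases Nat.eq_zero_or_pos (Γ.dist v u) with h0 | h0
    · exact absurd ((hreach u hu).dist_eq_zero_iff.1 h0).symm huv
    · exact h0
  -- parent function
  have hpar : ∀ u, u ∈ B → u ≠ v →
      ∃ w, Γ.Adj w u ∧ Γ.dist v w + 1 = Γ.dist v u ∧ w ∈ B := by
    intro u hu huv
    obtain ⟨p, hp⟩ := (hreach u hu).exists_walk_length_eq_dist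
    obtain ⟨w, hadj, q, hq⟩ := SimpleGraph.Walk.exists_eq_cons_of_ne huv p.reverse
    have hlen : q.length + 1 = Γ.dist v u := by
      have := SimpleGraph.Walk.length_reverse p
      rw [hq] at this
      rw [SimpleGraph.Walk.length_cons] at this
      omega
    have h1 : Γ.dist v w ≤ q.length := by
      have := SimpleGraph.dist_le q.reverse
      rwa [SimpleGraph.Walk.length_reverse] at this
    have h2 : Γ.dist v u ≤ Γ.dist v w + 1 := by
      obtain ⟨r, hr⟩ := SimpleGraph.Reachable.exists_walk_length_eq_dist
        (⟨q.reverse⟩ : Γ.Reachable v w)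
      have := SimpleGraph.dist_le (r.concat hadj.symm)
      rwa [SimpleGraph.Walk.length_concat, hr] at this
    refine ⟨w, hadj.symm, by omega, ?_⟩
    refine ⟨q.reverse, ?_⟩
    rw [SimpleGraph.Walk.length_reverse]
    have := hdist u hu
    omega
  set P : Fin n → Fin n := fun u =>
    if h : u ∈ B ∧ u ≠ v then (hpar u h.1 h.2).choose else v with hPdef
  have hP1 : ∀ u, u ∈ B → u ≠ v →
      Γ.Adj (P u) u ∧ Γ.dist v (P u) + 1 = Γ.dist v u ∧ P u ∈ B := by
    intro u hu huv
    have : P u = (hpar u hu huv).choose := by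
      rw [hPdef]; exact dif_pos ⟨hu, huv⟩
    rw [this]
    exact (hpar u hu huv).choose_spec
  have hPv : P v = v := by rw [hPdef]; exact dif_neg (by simp)
  -- iterates of the parent function
  have hIter : ∀ x, x ∈ B → ∀ j : ℕ, P^[j] x ∈ B ∧ Γ.dist v (P^[j] x) = Γ.dist v x - j := by
    intro x hx j
    induction j with
    | zero => simpa using hx
    | succ j ih =>
      obtain ⟨hu, hDu⟩ := ih
      rw [Function.iterate_succ_apply']
      set u := P^[j] x
      by_cases huv : u = v
      · rw [huv, hPv]
        refine ⟨hBv, ?_⟩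
        have hd0 : Γ.dist v v = 0 := SimpleGraph.dist_self
        rw [huv] at hDu
        rw [hd0] at hDu ⊢
        omega
      · obtain ⟨_, hD, hBP⟩ := hP1 u hu huv
        have := hDpos u hu huv
        exact ⟨hBP, by omega⟩
  have hVend : ∀ x, x ∈ B → P^[Γ.dist v x] x = v := by
    intro x hx
    obtain ⟨hu, hD⟩ := hIter x hx (Γ.dist v x)
    have h0 : Γ.dist v (P^[Γ.dist v x] x) = 0 := by omega
    exact ((hreach _ hu).dist_eq_zero_iff.1 h0).symm
  -- the ball as a finset
  set Bf : Finset (Fin n) := Finset.univ.filter (· ∈ B) with hBf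
  have hBfmem : ∀ u, u ∈ Bf ↔ u ∈ B := by intro u; simp [hBf]
  have hncard : B.ncard = Bf.card := by
    have hBcoe : B = ↑Bf := by ext u; simp [hBf]
    rw [hBcoe, Set.ncard_coe_finset]
  -- edges inside the ball
  set EB : Finset (Sym2 (Fin n)) := Finset.univ.filter
    (fun e => ¬ e.IsDiag ∧ (∀ x ∈ e, x ∈ B) ∧ present G e) with hEBdef
  have hEBcount : edgeCountIn m B = EB.card := by
    rw [edgeCountIn, hEBdef, Finset.card_filter]
    refine Finset.sum_congr rfl fun e _ => ?_
    by_cases hcnd : ¬ e.IsDiag ∧ ∀ x ∈ e, x ∈ B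
    · rw [if_pos hcnd, hm, gmult]
      by_cases hp : ∃ x y : Fin n, adj G x y = true ∧ e = s(x, y)
      · rw [if_pos hp, if_pos ⟨hcnd.1, hcnd.2, hp⟩]
      · rw [if_neg hp, if_neg (fun hh => hp hh.2.2)]
    · rw [if_neg hcnd, if_neg (fun hh => hcnd ⟨hh.1, hh.2.1⟩)]
  have hgt : Bf.card < EB.card := by rwa [hncard, hEBcount] at hcount
  have hAdjIff : ∀ x y : Fin n, Γ.Adj x y ↔ x ≠ y ∧ present G s(x, y) := by
    intro x y
    constructor
    · rintro ⟨hne, hpos⟩; exact ⟨hne, (gmult_pos_iff G _).1 hpos⟩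
    · rintro ⟨hne, hp⟩; exact ⟨hne, (gmult_pos_iff G _).2 hp⟩
  have hvBf : v ∈ Bf := (hBfmem v).2 hBv
  set PEall : Finset (Sym2 (Fin n)) := (Bf.erase v).image (fun u => s(u, P u)) with hPE
  have hPinj : ∀ u ∈ B, u ≠ v → ∀ u' ∈ B, u' ≠ v → s(u, P u) = s(u', P u') → u = u' := by
    intro u hu huv u' hu' huv' heq
    rcases Sym2.eq_iff.1 heq with ⟨h1, h2⟩ | ⟨h1, h2⟩
    · exact h1
    · exfalso
      obtain ⟨_, hd, _⟩ := hP1 u hu huv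
      obtain ⟨_, hd', _⟩ := hP1 u' hu' huv'
      rw [← h1] at hd'
      rw [h2] at hd
      omega
  have hPEcard : PEall.card = Bf.card - 1 := by
    rw [hPE, Finset.card_image_of_injOn, Finset.card_erase_of_mem hvBf]
    intro u hu u' hu' heq
    rw [Finset.mem_coe, Finset.mem_erase] at hu hu'
    exact hPinj u ((hBfmem u).1 hu.2) hu.1 u' ((hBfmem u').1 hu'.2) hu'.1 heq
  have hPEsub : PEall ⊆ EB := by
    intro e he
    obtain ⟨u, hu, rfl⟩ := Finset.mem_image.1 he
    obtain ⟨hunv, huBf⟩ := Finset.mem_erase.1 hu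
    have huB : u ∈ B := (hBfmem u).1 huBf
    obtain ⟨hadj, _, hPB⟩ := hP1 u huB hunv
    have hadj' := (hAdjIff (P u) u).1 hadj
    refine Finset.mem_filter.2 ⟨Finset.mem_univ _, ?_, ?_, ?_⟩
    · rw [Sym2.mk_isDiag_iff]; exact fun hh => hadj'.1 hh.symm
    · intro x hx
      rcases Sym2.mem_iff.1 hx with rfl | rfl
      · exact huB
      · exact hPB
    · rw [show s(u, P u) = s(P u, u) from Sym2.eq_swap]
      exact hadj'.2
  have h2le : 2 ≤ (EB \ PEall).card := by
    have hsd := Finset.le_card_sdiff PEall EB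
    have hBf1 : 1 ≤ Bf.card := Finset.card_pos.2 ⟨v, hvBf⟩
    omega
  obtain ⟨e1, he1, e2, he2, hne12⟩ := Finset.one_lt_card.1 (show 1 < (EB \ PEall).card by omega)
  obtain ⟨he1E, he1P⟩ := Finset.mem_sdiff.1 he1
  obtain ⟨he2E, he2P⟩ := Finset.mem_sdiff.1 he2
  obtain ⟨_, hd1, hin1, hpr1⟩ := Finset.mem_filter.1 he1E
  obtain ⟨_, hd2, hin2, hpr2⟩ := Finset.mem_filter.1 he2E
  obtain ⟨x1, y1, hxy1, he1eq⟩ := sym2_exists e1 hd1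
  obtain ⟨x2, y2, hxy2, he2eq⟩ := sym2_exists e2 hd2
  have hx1B : x1 ∈ B := hin1 _ (by rw [he1eq]; exact Sym2.mem_mk_left _ _)
  have hy1B : y1 ∈ B := hin1 _ (by rw [he1eq]; exact Sym2.mem_mk_right _ _)
  have hx2B : x2 ∈ B := hin2 _ (by rw [he2eq]; exact Sym2.mem_mk_left _ _)
  have hy2B : y2 ∈ B := hin2 _ (by rw [he2eq]; exact Sym2.mem_mk_right _ _)
  set c : Fin 4 → Fin n := ![x1, y1, x2, y2] with hc
  have hcB : ∀ i : Fin 4, c i ∈ B := by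
    intro i
    fin_cases i <;> simp only [hc, Matrix.cons_val_zero, Matrix.cons_val_one,
      Matrix.head_cons, Matrix.cons_val_two, Matrix.tail_cons,
      Matrix.cons_val_three] <;> assumption
  set S : Finset (Fin n) :=
    ((Finset.univ : Finset (Fin 4)) ×ˢ Finset.range (ℓ+1)).image
      (fun q => P^[q.2] (c q.1)) with hS
  have hScard : S.card ≤ 4 * ℓ + 4 := by
    calc S.card ≤ ((Finset.univ : Finset (Fin 4)) ×ˢ Finset.range (ℓ+1)).card :=
          Finset.card_image_le
      _ = 4 * ℓ + 4 := by
          rw [Finset.card_product, Finset.card_range]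
          simp [Fintype.card_fin]
          ring
  have hSB : ∀ u ∈ S, u ∈ B := by
    intro u hu
    obtain ⟨⟨i, j⟩, hmem, rfl⟩ := Finset.mem_image.1 hu
    exact (hIter (c i) (hcB i) j).1
  have hvS : v ∈ S := by
    refine Finset.mem_image.2 ⟨(0, Γ.dist v (c 0)), ?_, hVend (c 0) (hcB 0)⟩
    exact Finset.mem_product.2 ⟨Finset.mem_univ _,
      Finset.mem_range.2 (Nat.lt_succ_of_le (hdist _ (hcB 0)))⟩
  have hPS : ∀ u ∈ S, u ≠ v → P u ∈ S := by
    intro u hu hunv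
    obtain ⟨⟨i, j⟩, hmem, rfl⟩ := Finset.mem_image.1 hu
    obtain ⟨_, hj⟩ := Finset.mem_product.1 hmem
    have hjr := Finset.mem_range.1 hj
    obtain ⟨huB, hD⟩ := hIter (c i) (hcB i) j
    have hposd := hDpos _ huB hunv
    have hdle := hdist (c i) (hcB i)
    have hj1 : j + 1 < ℓ + 1 := by omega
    refine Finset.mem_image.2 ⟨(i, j+1), Finset.mem_product.2
      ⟨Finset.mem_univ _, Finset.mem_range.2 hj1⟩, ?_⟩
    rw [Function.iterate_succ_apply']
  have hmemS : ∀ i : Fin 4, c i ∈ S := by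
    intro i
    exact Finset.mem_image.2 ⟨(i, 0), Finset.mem_product.2
      ⟨Finset.mem_univ _, Finset.mem_range.2 (by omega)⟩, rfl⟩
  have hx1S : x1 ∈ S := by simpa [hc] using hmemS 0
  have hy1S : y1 ∈ S := by simpa [hc] using hmemS 1
  have hx2S : x2 ∈ S := by simpa [hc] using hmemS 2
  have hy2S : y2 ∈ S := by simpa [hc] using hmemS 3
  set Fs : Finset (Sym2 (Fin n)) :=
    (S.erase v).image (fun u => s(u, P u)) ∪ {e1, e2} with hFs
  have himg_sub_PE : (S.erase v).image (fun u => s(u, P u)) ⊆ PEall := by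
    intro e he
    obtain ⟨u, hu, rfl⟩ := Finset.mem_image.1 he
    obtain ⟨hunv, huS⟩ := Finset.mem_erase.1 hu
    exact Finset.mem_image.2 ⟨u, Finset.mem_erase.2
      ⟨hunv, (hBfmem u).2 (hSB u huS)⟩, rfl⟩
  have he1img : e1 ∉ (S.erase v).image (fun u => s(u, P u)) :=
    fun hh => he1P (himg_sub_PE hh)
  have he2img : e2 ∉ (S.erase v).image (fun u => s(u, P u)) :=
    fun hh => he2P (himg_sub_PE hh)
  have hdisj : Disjoint ((S.erase v).image (fun u => s(u, P u))) ({e1, e2} : Finset _) := by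
    rw [Finset.disjoint_right]
    intro e he
    rcases Finset.mem_insert.1 he with rfl | he'
    · exact he1img
    · rw [Finset.mem_singleton] at he'
      subst he'
      exact he2img
  have himgcard : ((S.erase v).image (fun u => s(u, P u))).card = S.card - 1 := by
    rw [Finset.card_image_of_injOn, Finset.card_erase_of_mem hvS]
    intro u hu u' hu' heq
    rw [Finset.mem_coe, Finset.mem_erase] at hu hu'
    exact hPinj u (hSB u hu.2) hu.1 u' (hSB u' hu'.2) hu'.1 heq
  have hFscard : Fs.card = S.card + 1 := by
    rw [hFs, Finset.card_union_of_disjoint hdisj, himgcard, Finset.card_pair hne12]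
    have hS1 : 1 ≤ S.card := Finset.card_pos.2 ⟨v, hvS⟩
    omega
  refine ⟨S, Fs, hScard, Finset.mem_powersetCard.2 ⟨?_, hFscard⟩, ?_⟩
  · -- Fs ⊆ edgesIn S
    intro e he
    rcases Finset.mem_union.1 he with he | he
    · obtain ⟨u, hu, rfl⟩ := Finset.mem_image.1 he
      obtain ⟨hunv, huS⟩ := Finset.mem_erase.1 hu
      have huB := hSB u huS
      obtain ⟨hadj, _, _⟩ := hP1 u huB hunv
      refine Finset.mem_filter.2 ⟨Finset.mem_univ _, ?_, ?_⟩
      · rw [Sym2.mk_isDiag_iff]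
        exact fun hh => ((hAdjIff (P u) u).1 hadj).1 hh.symm
      · intro x hx
        rcases Sym2.mem_iff.1 hx with rfl | rfl
        · exact huS
        · exact hPS u huS hunv
    · rcases Finset.mem_insert.1 he with rfl | he'
      · refine Finset.mem_filter.2 ⟨Finset.mem_univ _, hd1, ?_⟩
        intro x hx
        rw [he1eq] at hx
        rcases Sym2.mem_iff.1 hx with rfl | rfl
        · exact hx1S
        · exact hy1S
      · rw [Finset.mem_singleton] at he'
        subst he'
        refine Finset.mem_filter.2 ⟨Finset.mem_univ _, hd2, ?_⟩
        intro x hx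
        rw [he2eq] at hx
        rcases Sym2.mem_iff.1 hx with rfl | rfl
        · exact hx2S
        · exact hy2S
  · -- all edges of Fs are present in G
    intro e he
    rcases Finset.mem_union.1 he with he | he
    · obtain ⟨u, hu, rfl⟩ := Finset.mem_image.1 he
      obtain ⟨hunv, huS⟩ := Finset.mem_erase.1 hu
      have huB := hSB u huS
      obtain ⟨hadj, _, _⟩ := hP1 u huB hunv
      rw [show s(u, P u) = s(P u, u) from Sym2.eq_swap]
      exact ((hAdjIff (P u) u).1 hadj).2
    · rcases Finset.mem_insert.1 he with rfl | he'
      · exact hpr1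
      · rw [Finset.mem_singleton] at he'
        subst he'
        exact hpr2

end Structural
section Numeric
open Finset

lemma pow_le_exp_factorial (r : ℕ) :
    (r : ℝ) ^ r ≤ Real.exp 1 ^ r * (r.factorial : ℝ) := by
  have h := Real.sum_le_exp_of_nonneg (x := (r : ℝ)) (by positivity) (r + 1)
  have hterm : (r : ℝ) ^ r / (r.factorial : ℝ) ≤ Real.exp r :=
    le_trans (Finset.single_le_sum (f := fun i => (r : ℝ) ^ i / (i.factorial : ℝ))
      (fun i _ => by positivity) (Finset.self_mem_range_succ r)) h
  rw [div_le_iff₀ (by positivity)] at hterm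
  calc (r : ℝ) ^ r ≤ Real.exp r * r.factorial := hterm
    _ = Real.exp 1 ^ r * r.factorial := by
        rw [← Real.exp_nat_mul]
        norm_num

lemma choose_mul_factorial_le (N k : ℕ) :
    (N.choose k : ℝ) * (k.factorial : ℝ) ≤ (N : ℝ) ^ k := by
  have h : k.factorial * N.choose k ≤ N ^ k := by
    rw [← Nat.descFactorial_eq_factorial_mul_choose]
    exact Nat.descFactorial_le_pow N k
  calc (N.choose k : ℝ) * (k.factorial : ℝ)
      = ((k.factorial * N.choose k : ℕ) : ℝ) := by push_cast; ring
    _ ≤ ((N ^ k : ℕ) : ℝ) := by exact_mod_cast h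
    _ = (N : ℝ) ^ k := by push_cast; ring

lemma term_bound (N : ℕ) (M : ℝ) (hM : 1 ≤ M) (hN : 1 ≤ N) (r R : ℕ) (hrR : r ≤ R) :
    (N.choose r : ℝ) * ((r ^ 2).choose (r + 1) : ℝ) * (M / N) ^ (r + 1)
      ≤ ((R : ℝ) + 1) ^ 2 * (Real.exp 1 ^ 2 * M) ^ (R + 1) / N := by
  have hN0 : (0 : ℝ) < N := by exact_mod_cast hN
  have hE : (1 : ℝ) ≤ Real.exp 1 := Real.one_le_exp (by norm_num)
  set E := Real.exp 1 with hEdef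
  have hE0 : (0 : ℝ) < E := lt_of_lt_of_le one_pos hE
  set fr := (r.factorial : ℝ) with hfrdef
  set fr1 := ((r + 1).factorial : ℝ) with hfr1def
  have hfr0 : (0 : ℝ) < fr := by
    rw [hfrdef]; exact_mod_cast r.factorial_pos
  have hfr10 : (0 : ℝ) < fr1 := by
    rw [hfr1def]; exact_mod_cast (r + 1).factorial_pos
  have hfrle : fr ≤ fr1 := by
    rw [hfrdef, hfr1def]
    exact_mod_cast Nat.factorial_le (Nat.le_succ r)
  have hA : (N.choose r : ℝ) * fr ≤ (N : ℝ) ^ r := choose_mul_factorial_le N r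
  have hB : ((r ^ 2).choose (r + 1) : ℝ) * fr1 ≤ ((r : ℝ) ^ 2) ^ (r + 1) := by
    have := choose_mul_factorial_le (r ^ 2) (r + 1)
    calc ((r ^ 2).choose (r + 1) : ℝ) * fr1 ≤ ((r ^ 2 : ℕ) : ℝ) ^ (r + 1) := this
      _ = ((r : ℝ) ^ 2) ^ (r + 1) := by push_cast; ring
  have hrr : (r : ℝ) ^ r ≤ E ^ r * fr := pow_le_exp_factorial r
  have hB2 : ((r ^ 2).choose (r + 1) : ℝ) * fr1 ≤ E ^ (2 * r) * fr * fr1 * (r : ℝ) ^ 2 := by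
    calc ((r ^ 2).choose (r + 1) : ℝ) * fr1 ≤ ((r : ℝ) ^ 2) ^ (r + 1) := hB
      _ = ((r : ℝ) ^ r) ^ 2 * (r : ℝ) ^ 2 := by ring
      _ ≤ (E ^ r * fr) ^ 2 * (r : ℝ) ^ 2 := by
          apply mul_le_mul_of_nonneg_right _ (by positivity)
          exact pow_le_pow_left₀ (by positivity) hrr 2
      _ = E ^ (2 * r) * fr * fr * (r : ℝ) ^ 2 := by ring
      _ ≤ E ^ (2 * r) * fr * fr1 * (r : ℝ) ^ 2 := by
          apply mul_le_mul_of_nonneg_right _ (by positivity)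
          apply mul_le_mul_of_nonneg_left hfrle (by positivity)
  have hxy : (N.choose r : ℝ) * ((r ^ 2).choose (r + 1) : ℝ)
      ≤ (N : ℝ) ^ r * E ^ (2 * r) * (r : ℝ) ^ 2 := by
    have hmm : ((N.choose r : ℝ) * fr) * (((r ^ 2).choose (r + 1) : ℝ) * fr1)
        ≤ (N : ℝ) ^ r * (E ^ (2 * r) * fr * fr1 * (r : ℝ) ^ 2) :=
      mul_le_mul hA hB2 (by positivity) (by positivity)
    have h2 : ((N.choose r : ℝ) * ((r ^ 2).choose (r + 1) : ℝ)) * (fr * fr1)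
        ≤ ((N : ℝ) ^ r * E ^ (2 * r) * (r : ℝ) ^ 2) * (fr * fr1) := by
      calc ((N.choose r : ℝ) * ((r ^ 2).choose (r + 1) : ℝ)) * (fr * fr1)
          = ((N.choose r : ℝ) * fr) * (((r ^ 2).choose (r + 1) : ℝ) * fr1) := by ring
        _ ≤ (N : ℝ) ^ r * (E ^ (2 * r) * fr * fr1 * (r : ℝ) ^ 2) := hmm
        _ = ((N : ℝ) ^ r * E ^ (2 * r) * (r : ℝ) ^ 2) * (fr * fr1) := by ring
    exact le_of_mul_le_mul_right h2 (by positivity)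
  calc (N.choose r : ℝ) * ((r ^ 2).choose (r + 1) : ℝ) * (M / N) ^ (r + 1)
      ≤ ((N : ℝ) ^ r * E ^ (2 * r) * (r : ℝ) ^ 2) * (M / N) ^ (r + 1) := by
        apply mul_le_mul_of_nonneg_right hxy (by positivity)
    _ = E ^ (2 * r) * (r : ℝ) ^ 2 * M ^ (r + 1) / N := by
        rw [div_pow, pow_succ (N : ℝ)]
        field_simp
    _ ≤ ((R : ℝ) + 1) ^ 2 * (E ^ 2 * M) ^ (R + 1) / N := by
        have h1 : (r : ℝ) ^ 2 ≤ ((R : ℝ) + 1) ^ 2 := by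
          apply pow_le_pow_left₀ (by positivity)
          have : (r : ℝ) ≤ (R : ℝ) := by exact_mod_cast hrR
          linarith
        have h2 : E ^ (2 * r) ≤ E ^ (2 * (R + 1)) := pow_le_pow_right₀ hE (by omega)
        have h3 : M ^ (r + 1) ≤ M ^ (R + 1) := pow_le_pow_right₀ hM (by omega)
        have hnum : E ^ (2 * r) * (r : ℝ) ^ 2 * M ^ (r + 1)
            ≤ ((R : ℝ) + 1) ^ 2 * (E ^ 2 * M) ^ (R + 1) := by
          calc E ^ (2 * r) * (r : ℝ) ^ 2 * M ^ (r + 1)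
              ≤ E ^ (2 * (R + 1)) * ((R : ℝ) + 1) ^ 2 * M ^ (R + 1) :=
                mul_le_mul (mul_le_mul h2 h1 (by positivity) (by positivity)) h3
                  (by positivity) (by positivity)
            _ = ((R : ℝ) + 1) ^ 2 * (E ^ 2 * M) ^ (R + 1) := by
                rw [mul_pow, ← pow_mul]
                ring
        exact (div_le_div_iff_of_pos_right hN0).2 hnum

end Numeric
section FinalBound

lemma final_bound (δ : ℝ) (hδ : 0 < δ) (ℓ N : ℕ) (hℓ1 : 1 ≤ ℓ) (M : ℝ)
    (hM : 2 ≤ M) (hN : 2 ≤ N)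
    (h : (ℓ : ℝ) * Real.log M ≤ (min δ 1 / 100) * Real.log N) :
    (((4 * ℓ + 4 : ℕ) : ℝ) + 1) ^ 3 * (Real.exp 1 ^ 2 * M) ^ (4 * ℓ + 4 + 1)
      ≤ (N : ℝ) ^ δ := by
  have hM0 : (0 : ℝ) < M := by linarith
  have hN0 : (0 : ℝ) < N := by
    have : (2 : ℝ) ≤ N := by exact_mod_cast hN
    linarith
  have hℓR : (1 : ℝ) ≤ (ℓ : ℝ) := by exact_mod_cast hℓ1
  have hlogN : 0 ≤ Real.log N := Real.log_nonneg (by exact_mod_cast hN.trans' (by norm_num))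
  have hlog2 : (1 : ℝ) / 2 ≤ Real.log 2 := by
    have := Real.log_two_gt_d9
    linarith
  have hlogM2 : Real.log 2 ≤ Real.log M := Real.log_le_log (by norm_num) hM
  have hlogM0 : 0 ≤ Real.log M := by linarith
  have hlogM1 : 1 ≤ 2 * Real.log M := by linarith
  set R1 : ℝ := ((4 * ℓ + 4 : ℕ) : ℝ) + 1 with hR1def
  have hR1 : R1 = 4 * (ℓ : ℝ) + 5 := by rw [hR1def]; push_cast; ring
  have hR1pos : 0 < R1 := by rw [hR1]; linarith
  have hlogR1 : Real.log R1 ≤ R1 := by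
    have := Real.log_le_sub_one_of_pos hR1pos
    linarith
  -- rewrite the LHS as an exponential
  have hEM0 : (0 : ℝ) < Real.exp 1 ^ 2 * M := by positivity
  have hlogEM : Real.log (Real.exp 1 ^ 2 * M) = 2 + Real.log M := by
    rw [Real.log_mul (by positivity) (ne_of_gt hM0), Real.log_pow, Real.log_exp]
    push_cast; ring
  have hL : R1 ^ 3 * (Real.exp 1 ^ 2 * M) ^ (4 * ℓ + 4 + 1)
      = Real.exp (3 * Real.log R1 + (4 * (ℓ : ℝ) + 5) * (2 + Real.log M)) := by
    rw [Real.exp_add]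
    congr 1
    · rw [show (3 : ℝ) * Real.log R1 = Real.log (R1 ^ 3) by
          rw [Real.log_pow]; push_cast; ring,
        Real.exp_log (by positivity)]
    · rw [show (4 * (ℓ : ℝ) + 5) * (2 + Real.log M)
          = ((4 * ℓ + 4 + 1 : ℕ) : ℝ) * Real.log (Real.exp 1 ^ 2 * M) by
          rw [hlogEM]; push_cast; ring]
      rw [show ((4 * ℓ + 4 + 1 : ℕ) : ℝ) * Real.log (Real.exp 1 ^ 2 * M)
          = Real.log ((Real.exp 1 ^ 2 * M) ^ (4 * ℓ + 4 + 1)) by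
          rw [Real.log_pow]]
      rw [Real.exp_log (by positivity)]
  rw [hL]
  -- bound the exponent
  have hexp : 3 * Real.log R1 + (4 * (ℓ : ℝ) + 5) * (2 + Real.log M)
      ≤ 99 * ((ℓ : ℝ) * Real.log M) := by
    have hb : 0 ≤ (ℓ : ℝ) * (2 * Real.log M - 1) :=
      mul_nonneg (by linarith) (by linarith)
    have hc : 0 ≤ ((ℓ : ℝ) - 1) * Real.log M :=
      mul_nonneg (by linarith) hlogM0
    have hlogR1' : Real.log R1 ≤ 4 * (ℓ : ℝ) + 5 := by rw [← hR1]; exact hlogR1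
    nlinarith [hb, hc, hlogR1', hℓR, hlogM0]
  have hexp2 : 99 * ((ℓ : ℝ) * Real.log M) ≤ δ * Real.log N := by
    have h1 : 99 * ((ℓ : ℝ) * Real.log M) ≤ 99 * ((min δ 1 / 100) * Real.log N) := by
      have hml0 : 0 ≤ (ℓ : ℝ) * Real.log M := mul_nonneg (by linarith) hlogM0
      linarith
    have h2 : 99 * ((min δ 1 / 100) * Real.log N) ≤ δ * Real.log N := by
      have hm1 : min δ 1 ≤ δ := min_le_left _ _
      have hm0 : 0 ≤ min δ 1 := le_min hδ.le zero_le_one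
      nlinarith [hlogN]
    linarith
  calc Real.exp (3 * Real.log R1 + (4 * (ℓ : ℝ) + 5) * (2 + Real.log M))
      ≤ Real.exp (δ * Real.log N) := Real.exp_le_exp.2 (by linarith)
    _ = (N : ℝ) ^ δ := by
        rw [Real.rpow_def_of_pos hN0, mul_comm]

end FinalBound
/-- If `G ~ 𝔾(n, a_n/n, b_n/n)` and `ℓ_n · log(max(2 d_n, 2)) = o(log n)`,
then `G` is `ℓ_n`-tangle-free with probability at least `1 - n^{-1+o(1)}`. -/
theorem tangle_free_whp (a b : ℕ → ℝ) (ha : ∀ n, 0 ≤ a n) (hb : ∀ n, 0 ≤ b n)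
    (ℓ : ℕ → ℕ)
    (hℓ : Filter.Tendsto
      (fun n : ℕ =>
        (ℓ n : ℝ) * Real.log (max (2 * ((a n + b n) / 2)) 2) / Real.log n)
      Filter.atTop (nhds 0)) :
    ∀ δ > (0 : ℝ), ∃ N : ℕ, ∀ n ≥ N,
      bPr (a n) (b n) n
          {ω : SampleSpace n | ¬ MTangleFree (ℓ n) (gmult ω.2)}
        ≤ (n : ℝ) ^ (-1 + δ) := by
  intro δ hδ
  have hεpos : 0 < min δ 1 / 100 := by
    have : 0 < min δ 1 := lt_min hδ one_pos
    linarith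
  obtain ⟨N₀, hN₀⟩ := Metric.tendsto_atTop.1 hℓ _ hεpos
  refine ⟨max N₀ 2, fun n hn => ?_⟩
  have hn2 : 2 ≤ n := le_trans (le_max_right _ _) hn
  have hnN₀ : N₀ ≤ n := le_trans (le_max_left _ _) hn
  have hn2R : (2 : ℝ) ≤ (n : ℝ) := by exact_mod_cast hn2
  have hn0 : (0 : ℝ) < n := by linarith
  have hn1 : (1 : ℝ) < n := by linarith
  have hlogn : 0 < Real.log n := Real.log_pos hn1
  set M := max (2 * ((a n + b n) / 2)) 2 with hMdef
  have hM2 : (2 : ℝ) ≤ M := le_max_right _ _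
  have habs := hN₀ n hnN₀
  rw [Real.dist_eq, sub_zero] at habs
  have hkey : (ℓ n : ℝ) * Real.log M ≤ (min δ 1 / 100) * Real.log n := by
    have hlt := lt_of_abs_lt habs
    have h2 := mul_le_mul_of_nonneg_right hlt.le hlogn.le
    rwa [div_mul_cancel₀ _ (ne_of_gt hlogn)] at h2
  by_cases hℓ0 : ℓ n = 0
  · have hmtf : ∀ ω : SampleSpace n, MTangleFree (ℓ n) (gmult ω.2) := by
      rw [hℓ0]; exact fun ω => mtf_zero _
    have hzero : bPr (a n) (b n) n
        {ω : SampleSpace n | ¬ MTangleFree (ℓ n) (gmult ω.2)} = 0 := by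
      rw [bPr]
      exact Finset.sum_eq_zero fun ω _ => if_neg (not_not_intro (hmtf ω))
    rw [hzero]
    exact Real.rpow_nonneg hn0.le _
  have hℓ1 : 1 ≤ ℓ n := Nat.one_le_iff_ne_zero.2 hℓ0
  have hℓR : (1 : ℝ) ≤ (ℓ n : ℝ) := by exact_mod_cast hℓ1
  have hlogM0 : 0 ≤ Real.log M := Real.log_nonneg (by linarith)
  have hlogMn : Real.log M ≤ Real.log n := by
    have h1 : Real.log M ≤ (ℓ n : ℝ) * Real.log M := le_mul_of_one_le_left hlogM0 hℓR
    have hm1 : min δ 1 ≤ 1 := min_le_right _ _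
    have hm0 : 0 < min δ 1 := lt_min hδ one_pos
    nlinarith [hkey, hlogn.le]
  have hMn : M ≤ (n : ℝ) := (Real.log_le_log_iff (by linarith) hn0).1 hlogMn
  have habM : a n + b n ≤ M := by
    have := le_max_left (2 * ((a n + b n) / 2)) 2
    rw [← hMdef] at this
    linarith
  have haM : a n ≤ M := by have := hb n; linarith
  have hbM : b n ≤ M := by have := ha n; linarith
  have han : a n / n ≤ M / n := (div_le_div_iff_of_pos_right hn0).2 haM
  have hbn : b n / n ≤ M / n := (div_le_div_iff_of_pos_right hn0).2 hbM
  have ha0 : 0 ≤ a n / n := div_nonneg (ha n) hn0.le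
  have hb0 : 0 ≤ b n / n := div_nonneg (hb n) hn0.le
  have hq0 : 0 ≤ M / n := div_nonneg (by linarith) hn0.le
  have hq1 : M / n ≤ 1 := (div_le_one hn0).2 hMn
  have ha1 : a n / n ≤ 1 := le_trans han hq1
  have hb1 : b n / n ≤ 1 := le_trans hbn hq1
  have hmass : ∀ ω : SampleSpace n, 0 ≤ bmass (a n) (b n) n ω :=
    bmass_nonneg ha0 ha1 hb0 hb1
  set R := 4 * ℓ n + 4 with hRdef
  set t : Finset ((_ : ℕ) × (_ : Finset (Fin n)) × Finset (Sym2 (Fin n))) :=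
    (Finset.range (R + 1)).sigma (fun r =>
      (Finset.powersetCard r (Finset.univ : Finset (Fin n))).sigma (fun S =>
        Finset.powersetCard (r + 1) (edgesIn S))) with htdef
  have hcov : ∀ ω ∈ {ω : SampleSpace n | ¬ MTangleFree (ℓ n) (gmult ω.2)},
      ∃ p ∈ t, ω ∈ EvF p.2.2 := by
    intro ω hω
    obtain ⟨S, F, hS, hF, hpres⟩ := tangle_witness ω.2 hω
    refine ⟨⟨S.card, S, F⟩, ?_, hpres⟩
    rw [htdef]
    refine Finset.mem_sigma.2 ⟨Finset.mem_range.2 (show S.card < R + 1 by omega), ?_⟩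
    exact Finset.mem_sigma.2
      ⟨Finset.mem_powersetCard.2 ⟨Finset.subset_univ S, rfl⟩, hF⟩
  have hstep1 := bPr_le_sum_cover t _ (fun p => EvF p.2.2) hmass hcov
  have hsum : ∑ p ∈ t, bPr (a n) (b n) n (EvF p.2.2)
      = ∑ r ∈ Finset.range (R + 1),
          ∑ S ∈ Finset.powersetCard r (Finset.univ : Finset (Fin n)),
            ∑ F ∈ Finset.powersetCard (r + 1) (edgesIn S),
              bPr (a n) (b n) n (EvF F) := by
    rw [htdef, Finset.sum_sigma]
    exact Finset.sum_congr rfl fun r _ => Finset.sum_sigma _ _ _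
  have hE2M1 : (1 : ℝ) ≤ Real.exp 1 ^ 2 * M := by
    nlinarith [Real.one_le_exp (by norm_num : (0:ℝ) ≤ 1)]
  calc bPr (a n) (b n) n {ω : SampleSpace n | ¬ MTangleFree (ℓ n) (gmult ω.2)}
      ≤ ∑ r ∈ Finset.range (R + 1),
          ∑ S ∈ Finset.powersetCard r (Finset.univ : Finset (Fin n)),
            ∑ F ∈ Finset.powersetCard (r + 1) (edgesIn S),
              bPr (a n) (b n) n (EvF F) := hstep1.trans_eq hsum
    _ ≤ ∑ r ∈ Finset.range (R + 1),
          ∑ S ∈ Finset.powersetCard r (Finset.univ : Finset (Fin n)),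
            ∑ F ∈ Finset.powersetCard (r + 1) (edgesIn S), (M / n) ^ (r + 1) := by
        refine Finset.sum_le_sum fun r _ => Finset.sum_le_sum fun S _ =>
          Finset.sum_le_sum fun F hF => ?_
        obtain ⟨hFsub, hFcard⟩ := Finset.mem_powersetCard.1 hF
        have hnd : ∀ e ∈ F, ¬ e.IsDiag := fun e he =>
          ((Finset.mem_filter.1 (hFsub he)).2).1
        have hbnd := bPr_EvF_le (a n) (b n) (M / n) ha0 hb0 han hbn F hnd
        rwa [hFcard] at hbnd
    _ ≤ ∑ r ∈ Finset.range (R + 1),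
          ∑ S ∈ Finset.powersetCard r (Finset.univ : Finset (Fin n)),
            (((r ^ 2).choose (r + 1) : ℝ) * (M / n) ^ (r + 1)) := by
        refine Finset.sum_le_sum fun r _ => Finset.sum_le_sum fun S hS => ?_
        obtain ⟨_, hScard⟩ := Finset.mem_powersetCard.1 hS
        rw [Finset.sum_const, Finset.card_powersetCard, nsmul_eq_mul]
        have hchle : (edgesIn S).card.choose (r + 1) ≤ (r ^ 2).choose (r + 1) :=
          Nat.choose_le_choose _ (by
            have := card_edgesIn_le S
            rw [hScard] at this
            exact this)
        exact mul_le_mul_of_nonneg_right (by exact_mod_cast hchle) (by positivity)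
    _ = ∑ r ∈ Finset.range (R + 1),
          (n.choose r : ℝ) * ((r ^ 2).choose (r + 1) : ℝ) * (M / n) ^ (r + 1) := by
        refine Finset.sum_congr rfl fun r _ => ?_
        rw [Finset.sum_const, Finset.card_powersetCard, Finset.card_univ,
          Fintype.card_fin, nsmul_eq_mul]
        ring
    _ ≤ ∑ _r ∈ Finset.range (R + 1),
          ((R : ℝ) + 1) ^ 2 * (Real.exp 1 ^ 2 * M) ^ (R + 1) / n := by
        refine Finset.sum_le_sum fun r hr => ?_
        exact term_bound n M (by linarith) (by omega) r R
          (by have := Finset.mem_range.1 hr; omega)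
    _ = ((R : ℝ) + 1) ^ 3 * (Real.exp 1 ^ 2 * M) ^ (R + 1) / n := by
        rw [Finset.sum_const, Finset.card_range, nsmul_eq_mul]
        push_cast
        ring
    _ ≤ (n : ℝ) ^ δ / n := by
        apply (div_le_div_iff_of_pos_right hn0).2
        have hfb := final_bound δ hδ (ℓ n) n hℓ1 M hM2 hn2 hkey
        rw [hRdef]
        exact hfb
    _ = (n : ℝ) ^ (-1 + δ) := by
        rw [show (-1 + δ) = δ - 1 by ring, Real.rpow_sub hn0, Real.rpow_one]
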